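/- Let α, β be real numbers with |α| + |β| < 1 and β ≠ 0. Then the 2×2 real symmetric matrix M* with entries M*₀₀ = α² − 1 + |β|, M*₀₁ = M*₁₀ = α|β|, M*₁₁ = β² − |β| is negative definite: for every nonzero v ∈ ℝ², v ⬝ᵥ (M*.mulVec v) < 0. In particular M*₀₀ < 0 and det M* = |β|((|β| − 1)² − α²) > 0. -/
import Mathlib


open Matrix

theorem kawahara_adjoint_matrix_neg_def (α β : ℝ) (hab : |α| + |β| < 1) (hβ : β ≠ 0) :
    (∀ v : Fin 2 → ℝ, v ≠ 0 →
      v ⬝ᵥ (!![α ^ 2 - 1 + |β|, α * |β|; α * |β|, β ^ 2 - |β|]).mulVec v < 0) ∧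
    (!![α ^ 2 - 1 + |β|, α * |β|; α * |β|, β ^ 2 - |β|]) 0 0 < 0 ∧
    (!![α ^ 2 - 1 + |β|, α * |β|; α * |β|, β ^ 2 - |β|]).det
      = |β| * ((|β| - 1) ^ 2 - α ^ 2) ∧
    0 < (!![α ^ 2 - 1 + |β|, α * |β|; α * |β|, β ^ 2 - |β|]).det := by
  have hb : 0 < |β| := abs_pos.mpr hβ
  have ha0 : 0 ≤ |α| := abs_nonneg α
  have hb2 : β ^ 2 = |β| ^ 2 := (sq_abs β).symm
  have ha2 : α ^ 2 = |α| ^ 2 := (sq_abs α).symm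
  have haneg : α ^ 2 - 1 + |β| < 0 := by nlinarith
  have hdet : (!![α ^ 2 - 1 + |β|, α * |β|; α * |β|, β ^ 2 - |β|]).det
      = |β| * ((|β| - 1) ^ 2 - α ^ 2) := by
    simp [Matrix.det_fin_two]; ring_nf; nlinarith [sq_abs β]
  have hdetpos : 0 < |β| * ((|β| - 1) ^ 2 - α ^ 2) := by
    have hx : α ^ 2 < (|β| - 1) ^ 2 := by nlinarith
    exact mul_pos hb (by linarith)
  refine ⟨?_, by simpa using haneg, hdet, hdet ▸ hdetpos⟩
  intro v hv
  have hv' : v 0 ≠ 0 ∨ v 1 ≠ 0 := by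
    by_contra h
    push_neg at h
    apply hv
    funext i
    fin_cases i <;> simp [h.1, h.2]
  have hQ : v ⬝ᵥ (!![α ^ 2 - 1 + |β|, α * |β|; α * |β|, β ^ 2 - |β|]).mulVec v
      = (α ^ 2 - 1 + |β|) * v 0 ^ 2 + 2 * (α * |β|) * (v 0 * v 1)
        + (β ^ 2 - |β|) * v 1 ^ 2 := by
    simp [dotProduct, Matrix.mulVec, Fin.sum_univ_two]
    ring
  rw [hQ]
  set a := α ^ 2 - 1 + |β|
  have key : a * ((a * v 0 ^ 2 + 2 * (α * |β|) * (v 0 * v 1) + (β ^ 2 - |β|) * v 1 ^ 2))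
      = (a * v 0 + (α * |β|) * v 1) ^ 2 + (|β| * ((|β| - 1) ^ 2 - α ^ 2)) * v 1 ^ 2 := by
    simp only [a]
    rw [hb2]
    ring
  by_cases h1 : v 1 = 0
  · have h0 : v 0 ≠ 0 := by tauto
    have h02 : 0 < v 0 ^ 2 := by positivity
    rw [h1]
    nlinarith [haneg, h02]
  · have h12 : 0 < v 1 ^ 2 := by positivity
    have hDy : 0 < (|β| * ((|β| - 1) ^ 2 - α ^ 2)) * v 1 ^ 2 := mul_pos hdetpos h12
    nlinarith [key, sq_nonneg (a * v 0 + (α * |β|) * v 1), hDy, haneg]
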